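/- Let G be a graph whose number of non-adjacent pairs of vertices is at most k (so G can be completed to a clique by adding at most k edges), and suppose S ⊆ V(G) induces a d-colorable subgraph. If X ⊆ S is the set of vertices of S having at least one non-neighbor in S, then |X| ≤ (d + √(d² + 8dk))/2. -/

import Mathlib

set_option maxHeartbeats 1000000 in
/-- Let `G` have at most `k` non-adjacent pairs of vertices, and let `S` induce a
`d`-colorable subgraph. If `X` is the set of vertices of `S` having at least one
non-neighbor in `S`, then `|X| ≤ (d + √(d² + 8dk))/2`. -/
theorem stmt4 {V : Type*} [Fintype V] (G : SimpleGraph V) (d k : ℕ) (hd : 1 ≤ d)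
    (hk : Gᶜ.edgeSet.ncard ≤ k) (S : Set V)
    (hcol : ∃ c : V → Fin d, ∀ u ∈ S, ∀ v ∈ S, G.Adj u v → c u ≠ c v)
    (X : Set V) (hX : X = {v ∈ S | ∃ u ∈ S, u ≠ v ∧ ¬ G.Adj v u}) :
    (X.ncard : ℝ) ≤ ((d : ℝ) + Real.sqrt ((d : ℝ) ^ 2 + 8 * d * k)) / 2 := by
  classical
  obtain ⟨c, hc⟩ := hcol
  have hXS : X ⊆ S := by rw [hX]; intro v hv; exact hv.1
  set Xf : Finset V := X.toFinset with hXf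
  have hXfS : ∀ v ∈ Xf, v ∈ S := by
    intro v hv
    exact hXS (Set.mem_toFinset.mp hv)
  set n : ℕ := Xf.card with hn
  have hncard : X.ncard = n := Set.ncard_eq_toFinset_card' X
  -- fibers
  set f : Fin d → ℕ := fun i => (Xf.filter (fun v => c v = i)).card with hf
  have hsum : ∑ i, f i = n := by
    rw [hn]
    exact (Finset.card_eq_sum_card_fiberwise (fun x _ => Finset.mem_univ (c x))).symm
  -- same-color pairs (including diagonal)
  set Q : Finset (V × V) :=
      (Xf ×ˢ Xf).filter (fun p => c p.1 = c p.2) with hQ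
  have hQcard : Q.card = ∑ i, f i ^ 2 := by
    have : Q = Finset.univ.biUnion
        (fun i : Fin d => (Xf.filter (fun v => c v = i)) ×ˢ (Xf.filter (fun v => c v = i))) := by
      ext p
      simp only [hQ, Finset.mem_filter, Finset.mem_product, Finset.mem_biUnion,
        Finset.mem_univ, true_and]
      constructor
      · rintro ⟨⟨h1, h2⟩, h3⟩
        exact ⟨c p.2, ⟨h1, h3⟩, h2, rfl⟩
      · rintro ⟨i, ⟨h1, h1'⟩, h2, h2'⟩
        exact ⟨⟨h1, h2⟩, h1'.trans h2'.symm⟩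
    rw [this, Finset.card_biUnion]
    · simp [f, sq, Finset.card_product]
    · intro i _ j _ hij
      simp only [Finset.disjoint_left]
      rintro p hp hp'
      simp only [Finset.mem_product, Finset.mem_filter] at hp hp'
      exact hij (hp.1.2.symm.trans hp'.1.2)
  -- off-diagonal same-color pairs map injectively into darts of Gᶜ
  set P : Finset (V × V) := Q.filter (fun p => p.1 ≠ p.2) with hP
  have hPadj : ∀ p ∈ P, Gᶜ.Adj p.1 p.2 := by
    intro p hp
    simp only [hP, hQ, Finset.mem_filter, Finset.mem_product] at hp
    obtain ⟨⟨⟨h1, h2⟩, h3⟩, h4⟩ := hp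
    refine ⟨h4, fun hadj => ?_⟩
    exact hc p.1 (hXfS _ h1) p.2 (hXfS _ h2) hadj h3
  have hPcard : P.card ≤ 2 * k := by
    have hkf : Gᶜ.edgeFinset.card ≤ k := by
      rwa [SimpleGraph.edgeFinset, ← Set.ncard_eq_toFinset_card']
    have hinj : Fintype.card ↥P ≤ Fintype.card Gᶜ.Dart := by
      apply Fintype.card_le_of_injective
        (fun p : ↥P => SimpleGraph.Dart.mk (((p : V × V)).1, ((p : V × V)).2)
          (hPadj (p : V × V) p.2))
      intro p q hpq
      have h : ((p : V × V).1, (p : V × V).2) = ((q : V × V).1, (q : V × V).2) :=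
        congrArg SimpleGraph.Dart.toProd hpq
      rw [Prod.ext_iff] at h
      exact Subtype.ext (Prod.ext h.1 h.2)
    rw [Fintype.card_coe] at hinj
    have h := SimpleGraph.dart_card_eq_twice_card_edges (G := Gᶜ)
    omega
  -- Q = P ∪ diagonal
  have hQP : Q.card ≤ P.card + n := by
    have : Q.card = P.card + (Q.filter (fun p => ¬ p.1 ≠ p.2)).card :=
      (Finset.card_filter_add_card_filter_not (s := Q) (fun p => p.1 ≠ p.2)).symm
    rw [this]
    have : (Q.filter (fun p => ¬ p.1 ≠ p.2)).card ≤ n := by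
      apply Finset.card_le_card_of_injOn (fun p => p.1)
      · intro p hp
        simp only [hQ, Finset.mem_coe, Finset.mem_filter, Finset.mem_product] at hp
        exact hp.1.1.1
      · intro p hp q hq hpq
        simp only [Finset.mem_coe, Finset.mem_filter, not_not] at hp hq
        have hpq' : p.1 = q.1 := hpq
        ext
        · exact hpq'
        · rw [← hp.2, ← hq.2, hpq']
    omega
  have hQn : Q.card ≤ 2 * k + n := by omega
  -- Cauchy–Schwarz: n² ≤ d * Q.card
  have hcs : (n : ℕ) ^ 2 ≤ d * Q.card := by
    calc n ^ 2 = (∑ i, f i) ^ 2 := by rw [hsum]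
      _ ≤ (Finset.univ : Finset (Fin d)).card * ∑ i, f i ^ 2 :=
          sq_sum_le_card_mul_sum_sq
      _ = d * Q.card := by rw [hQcard, Finset.card_univ, Fintype.card_fin]
  have key : ((n : ℝ)) ^ 2 ≤ (d : ℝ) * (2 * k + n) := by
    have := hcs.trans (Nat.mul_le_mul_left d hQn)
    have := (Nat.cast_le (α := ℝ)).mpr this
    push_cast at this ⊢
    linarith
  rw [hncard]
  set s : ℝ := Real.sqrt ((d : ℝ) ^ 2 + 8 * d * k) with hs
  have hs0 : 0 ≤ s := Real.sqrt_nonneg _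
  have hs2 : s ^ 2 = (d : ℝ) ^ 2 + 8 * d * k := by
    rw [hs, Real.sq_sqrt]; positivity
  nlinarith [sq_nonneg ((2 : ℝ) * n - d - s), sq_nonneg ((2 : ℝ) * n - d + s),
    Nat.cast_nonneg (α := ℝ) n, Nat.cast_nonneg (α := ℝ) d, Nat.cast_nonneg (α := ℝ) k]
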